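/- arXiv:1910.12605 — 6 statements merged into one kernel-verified Lean document; each statement's English description precedes it below -/
import Mathlib

section
/- For every σ > 0, the sequence ℓ_n = (log(n + e − 1))^{σn} satisfies the moderate growth estimate ℓ_{j+k} ≤ e^{σ(j+k)} · ℓ_j · ℓ_k for all j,k ≥ 1. -/
lemma aux_log_bound (σ a b : ℝ) (hσ : 0 < σ) (ha : 1 ≤ a) (hb : 1 ≤ b) :
    (Real.log (a + b + Real.exp 1 - 1)) ^ (σ * a) ≤
      Real.exp (σ * b) * (Real.log (a + Real.exp 1 - 1)) ^ (σ * a) := by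
  set E := Real.exp 1 with hE
  have hE1 : 1 < E := by
    have := Real.exp_one_gt_d9; linarith
  have hpos : 0 < a + E - 1 := by linarith
  set t := b / (a + E - 1) with htdef
  have ht0 : 0 ≤ t := by positivity
  have hA1 : 1 ≤ Real.log (a + E - 1) := by
    rw [Real.le_log_iff_exp_le hpos]
    rw [hE]; linarith
  have hC0 : 0 ≤ Real.log (a + b + E - 1) := Real.log_nonneg (by linarith)
  have hprod : a + b + E - 1 = (a + E - 1) * (1 + t) := by
    rw [htdef]; field_simp; ring
  have hlog1t : Real.log (1 + t) ≤ t := by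
    have := Real.log_le_sub_one_of_pos (x := 1 + t) (by linarith)
    linarith
  have hC : Real.log (a + b + E - 1) ≤ Real.log (a + E - 1) * (1 + t) := by
    rw [hprod, Real.log_mul (by positivity) (by positivity)]
    nlinarith
  have hσa : 0 ≤ σ * a := by positivity
  have hat : a * t ≤ b := by
    rw [htdef, ← mul_div_assoc, div_le_iff₀ hpos]
    nlinarith
  have hexp : (1 + t) ^ (σ * a) ≤ Real.exp (σ * b) := by
    rw [Real.rpow_def_of_pos (by linarith)]
    apply Real.exp_le_exp.mpr
    have h1 : σ * a * Real.log (1 + t) ≤ σ * a * t :=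
      mul_le_mul_of_nonneg_left hlog1t hσa
    nlinarith
  calc (Real.log (a + b + E - 1)) ^ (σ * a)
      ≤ (Real.log (a + E - 1) * (1 + t)) ^ (σ * a) :=
        Real.rpow_le_rpow hC0 hC hσa
    _ = (Real.log (a + E - 1)) ^ (σ * a) * (1 + t) ^ (σ * a) :=
        Real.mul_rpow (by linarith) (by linarith)
    _ ≤ (Real.log (a + E - 1)) ^ (σ * a) * Real.exp (σ * b) := by
        apply mul_le_mul_of_nonneg_left hexp
        exact Real.rpow_nonneg (by linarith) _
    _ = Real.exp (σ * b) * (Real.log (a + E - 1)) ^ (σ * a) := mul_comm _ _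

theorem log_sequence_moderate_growth (σ : ℝ) (hσ : 0 < σ) :
    ∀ j k : ℕ, 1 ≤ j → 1 ≤ k →
      (Real.log ((j : ℝ) + (k : ℝ) + Real.exp 1 - 1)) ^ (σ * ((j : ℝ) + (k : ℝ))) ≤
        Real.exp (σ * ((j : ℝ) + (k : ℝ))) *
          (Real.log ((j : ℝ) + Real.exp 1 - 1)) ^ (σ * (j : ℝ)) *
          (Real.log ((k : ℝ) + Real.exp 1 - 1)) ^ (σ * (k : ℝ)) := by
  intro j k hj hk
  set a : ℝ := (j : ℝ) with hadef
  set b : ℝ := (k : ℝ) with hbdef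
  have ha : 1 ≤ a := by rw [hadef]; exact_mod_cast hj
  have hb : 1 ≤ b := by rw [hbdef]; exact_mod_cast hk
  set E := Real.exp 1 with hE
  have hE1 : 1 < E := by
    have := Real.exp_one_gt_d9; linarith
  have hCpos : 0 < Real.log (a + b + E - 1) := Real.log_pos (by linarith)
  have hsplit : (Real.log (a + b + E - 1)) ^ (σ * (a + b)) =
      (Real.log (a + b + E - 1)) ^ (σ * a) * (Real.log (a + b + E - 1)) ^ (σ * b) := by
    rw [← Real.rpow_add hCpos]; ring_nf
  have h1 := aux_log_bound σ a b hσ ha hb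
  have h2 := aux_log_bound σ b a hσ hb ha
  rw [show b + a + E - 1 = a + b + E - 1 by ring] at h2
  have hC0 : 0 ≤ Real.log (a + b + E - 1) := le_of_lt hCpos
  have key : (Real.log (a + b + E - 1)) ^ (σ * a) * (Real.log (a + b + E - 1)) ^ (σ * b) ≤
      (Real.exp (σ * b) * (Real.log (a + E - 1)) ^ (σ * a)) *
      (Real.exp (σ * a) * (Real.log (b + E - 1)) ^ (σ * b)) := by
    apply mul_le_mul h1 h2 (Real.rpow_nonneg hC0 _)
    exact mul_nonneg (Real.exp_pos _).le
      (Real.rpow_nonneg (Real.log_nonneg (by linarith)) _)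
  rw [hsplit]
  calc (Real.log (a + b + E - 1)) ^ (σ * a) * (Real.log (a + b + E - 1)) ^ (σ * b)
      ≤ (Real.exp (σ * b) * (Real.log (a + E - 1)) ^ (σ * a)) *
        (Real.exp (σ * a) * (Real.log (b + E - 1)) ^ (σ * b)) := key
    _ = (Real.exp (σ * b) * Real.exp (σ * a)) * (Real.log (a + E - 1)) ^ (σ * a) *
        (Real.log (b + E - 1)) ^ (σ * b) := by ring
    _ = Real.exp (σ * (a + b)) * (Real.log (a + E - 1)) ^ (σ * a) *
        (Real.log (b + E - 1)) ^ (σ * b) := by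
        rw [← Real.exp_add]; ring_nf
end

section
/- Let {m_n} and {ℓ_n} be weight sequences such that lim_{k→∞} (m_k/ℓ_k)^{1/k} = 0. Then for every δ > 0, lim_{t→∞} [sup_{p∈ℕ₀} tᵖ/(ℓ_p·p!)] / [sup_{p∈ℕ₀} (δt)ᵖ/(m_p·p!)] = 0. -/
open Filter Real

private lemma one_le_of_logconvex (f : ℕ → ℝ) (hp : ∀ n, 0 < f n) (h0 : f 0 = 1)
    (h1 : f 1 = 1) (hc : ∀ n : ℕ, (f (n + 1)) ^ 2 ≤ f n * f (n + 2)) : ∀ n, 1 ≤ f n := by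
  have mono : ∀ n, f n ≤ f (n+1) := by
    intro n
    induction n with
    | zero => rw [h0, h1]
    | succ k ih => nlinarith [hc k, hp k, hp (k+1), hp (k+2)]
  intro n
  induction n with
  | zero => rw [h0]
  | succ k ih => exact ih.trans (mono k)

private lemma term_le_exp (f : ℕ → ℝ) (hf : ∀ n, 1 ≤ f n) (t : ℝ) (ht : 0 ≤ t) (p : ℕ) :
    t ^ p / (f p * (Nat.factorial p : ℝ)) ≤ Real.exp t := by
  have h1 : t ^ p / (f p * (Nat.factorial p : ℝ)) ≤ t ^ p / (Nat.factorial p : ℝ) := by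
    apply div_le_div_of_nonneg_left (pow_nonneg ht p)
    · positivity
    · have hfac : (1:ℝ) ≤ (Nat.factorial p : ℝ) := by
        exact_mod_cast Nat.one_le_iff_ne_zero.2 (Nat.factorial_ne_zero p)
      nlinarith [hf p]
  refine h1.trans ?_
  calc t ^ p / (Nat.factorial p : ℝ) ≤ ∑ i ∈ Finset.range (p+1), t ^ i / (i.factorial : ℝ) := by
        refine Finset.single_le_sum (f := fun i => t ^ i / (i.factorial : ℝ)) ?_
          (Finset.self_mem_range_succ p)
        intro i _; positivity
    _ ≤ Real.exp t := Real.sum_le_exp_of_nonneg ht _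

theorem associated_functions_quotient_tendsto_zero (ℓ m : ℕ → ℝ) (Hℓ Hm : ℝ)
    (hℓpos : ∀ n, 0 < ℓ n) (hℓ0 : ℓ 0 = 1) (hℓ1 : ℓ 1 = 1)
    (hℓconv : ∀ n : ℕ, (ℓ (n + 1)) ^ 2 ≤ ℓ n * ℓ (n + 2))
    (hHℓ : 1 < Hℓ)
    (hℓmod : ∀ j k : ℕ, ℓ (j + k) ≤ Hℓ ^ (j + k) * ℓ j * ℓ k)
    (hmpos : ∀ n, 0 < m n) (hm0 : m 0 = 1) (hm1 : m 1 = 1)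
    (hmconv : ∀ n : ℕ, (m (n + 1)) ^ 2 ≤ m n * m (n + 2))
    (hHm : 1 < Hm)
    (hmmod : ∀ j k : ℕ, m (j + k) ≤ Hm ^ (j + k) * m j * m k)
    (hlim : Filter.Tendsto (fun k : ℕ => (m k / ℓ k) ^ ((1 : ℝ) / (k : ℝ)))
      Filter.atTop (nhds 0)) :
    ∀ δ : ℝ, 0 < δ →
      Filter.Tendsto
        (fun t : ℝ => (⨆ p : ℕ, t ^ p / (ℓ p * (Nat.factorial p : ℝ))) /
          (⨆ p : ℕ, (δ * t) ^ p / (m p * (Nat.factorial p : ℝ))))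
        Filter.atTop (nhds 0) := by
  have hℓge := one_le_of_logconvex ℓ hℓpos hℓ0 hℓ1 hℓconv
  have hmge := one_le_of_logconvex m hmpos hm0 hm1 hmconv
  intro δ hδ
  rw [NormedAddCommGroup.tendsto_nhds_zero]
  intro ε hε
  -- N₀ : eventually ℓ k ≥ (2/δ)^k m k, i.e. m k ≤ (δ/2)^k ℓ k
  have hδ2 : (0:ℝ) < δ/2 := by positivity
  obtain ⟨N₀, hN₀⟩ := (Metric.tendsto_atTop.mp hlim) (δ/2) hδ2
  -- N₁ : (1/2)^N₁ < ε/2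
  obtain ⟨N₁, hN₁⟩ := exists_pow_lt_of_lt_one (show (0:ℝ) < ε/2 by positivity)
    (show (1:ℝ)/2 < 1 by norm_num)
  set N : ℕ := max (max N₀ N₁) 1 with hN
  have hNN₀ : N₀ ≤ N := le_max_of_le_left (le_max_left _ _)
  have hNN₁ : N₁ ≤ N := le_max_of_le_left (le_max_right _ _)
  have hN1 : 1 ≤ N := le_max_right _ _
  have hhalfN : ((1:ℝ)/2)^N ≤ ε/2 :=
    le_of_lt (lt_of_le_of_lt (pow_le_pow_of_le_one (by norm_num) (by norm_num) hNN₁) hN₁)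
  -- key tail estimate
  have key : ∀ p : ℕ, N ≤ p → m p ≤ (δ/2)^p * ℓ p := by
    intro p hp
    have hp1 : 1 ≤ p := hN1.trans hp
    have hd := hN₀ p (hNN₀.trans hp)
    rw [Real.dist_eq, sub_zero] at hd
    have hx : 0 < m p / ℓ p := div_pos (hmpos p) (hℓpos p)
    have hlt : (m p / ℓ p) ^ ((1:ℝ)/(p:ℝ)) < δ/2 := (le_abs_self _).trans_lt hd
    have hpne : (p:ℝ) ≠ 0 := Nat.cast_ne_zero.2 (by omega)
    have heq : ((m p / ℓ p) ^ ((1:ℝ)/(p:ℝ))) ^ p = m p / ℓ p := by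
      rw [← Real.rpow_natCast ((m p / ℓ p) ^ ((1:ℝ)/(p:ℝ))) p, ← Real.rpow_mul hx.le,
        one_div, inv_mul_cancel₀ hpne, Real.rpow_one]
    have hlt2 : m p / ℓ p < (δ/2)^p := by
      rw [← heq]
      exact pow_lt_pow_left₀ hlt (Real.rpow_nonneg hx.le _) (by omega)
    exact le_of_lt ((div_lt_iff₀ (hℓpos p)).mp hlt2)
  set T : ℝ := 2 * (m (N+1) * (Nat.factorial (N+1) : ℝ)) / (ε * δ^(N+1)) with hT
  filter_upwards [eventually_ge_atTop (max 1 T)] with t ht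
  have ht1 : (1:ℝ) ≤ t := (le_max_left _ _).trans ht
  have htT : T ≤ t := (le_max_right _ _).trans ht
  have ht0 : 0 < t := lt_of_lt_of_le one_pos ht1
  -- boundedness of both suprema
  have bddℓ : BddAbove (Set.range fun p => t ^ p / (ℓ p * (Nat.factorial p : ℝ))) :=
    ⟨Real.exp t, by rintro x ⟨p, rfl⟩; exact term_le_exp ℓ hℓge t ht0.le p⟩
  have bddm : BddAbove (Set.range fun p => (δ*t) ^ p / (m p * (Nat.factorial p : ℝ))) :=
    ⟨Real.exp (δ*t), by rintro x ⟨p, rfl⟩; exact term_le_exp m hmge (δ*t) (by positivity) p⟩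
  set M : ℝ := ⨆ p : ℕ, (δ * t) ^ p / (m p * (Nat.factorial p : ℝ)) with hM
  have hMge : ∀ p : ℕ, (δ * t) ^ p / (m p * (Nat.factorial p : ℝ)) ≤ M :=
    fun p => le_ciSup bddm p
  have hM1 : (1:ℝ) ≤ M := by
    have := hMge 0
    simpa [hm0] using this
  have hMpos : 0 < M := lt_of_lt_of_le one_pos hM1
  -- L ≤ (ε/2) * M
  have hK : (0:ℝ) < m (N+1) * (Nat.factorial (N+1) : ℝ) := by
    have h1 := hmpos (N+1)
    have h2 : (0:ℝ) < (Nat.factorial (N+1) : ℝ) := by exact_mod_cast Nat.factorial_pos (N+1)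
    positivity
  have hmain : (⨆ p : ℕ, t ^ p / (ℓ p * (Nat.factorial p : ℝ))) ≤ (ε/2) * M := by
    refine ciSup_le fun p => ?_
    rcases le_or_gt N p with hp | hp
    · -- tail case
      have h1 : t ^ p / (ℓ p * (Nat.factorial p : ℝ)) ≤
          ((1:ℝ)/2)^p * ((δ*t) ^ p / (m p * (Nat.factorial p : ℝ))) := by
        have hle : (2/δ)^p * m p * (Nat.factorial p : ℝ) ≤ ℓ p * (Nat.factorial p : ℝ) := by
          have hkey := key p hp
          have h2 : (2/δ)^p * m p ≤ ℓ p := by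
            have hmul := mul_le_mul_of_nonneg_left hkey
              (le_of_lt (pow_pos (by positivity : (0:ℝ) < 2/δ) p))
            calc (2/δ)^p * m p ≤ (2/δ)^p * ((δ/2)^p * ℓ p) := hmul
              _ = ℓ p := by
                  rw [← mul_assoc, ← mul_pow]
                  have hone : (2/δ) * (δ/2) = 1 := by field_simp
                  rw [hone, one_pow, one_mul]
          exact mul_le_mul_of_nonneg_right h2 (Nat.cast_nonneg _)
        have hpos2 : (0:ℝ) < (2/δ)^p * m p * (Nat.factorial p : ℝ) := by
          have h1 := hmpos p
          have h2 : (0:ℝ) < (Nat.factorial p : ℝ) := by exact_mod_cast Nat.factorial_pos p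
          positivity
        calc t ^ p / (ℓ p * (Nat.factorial p : ℝ))
            ≤ t ^ p / ((2/δ)^p * m p * (Nat.factorial p : ℝ)) :=
              div_le_div_of_nonneg_left (pow_nonneg ht0.le p) hpos2 hle
          _ = ((1:ℝ)/2)^p * ((δ*t) ^ p / (m p * (Nat.factorial p : ℝ))) := by
              have hδ0 : δ ≠ 0 := ne_of_gt hδ
              have hm0' : m p ≠ 0 := ne_of_gt (hmpos p)
              have hf0 : (Nat.factorial p : ℝ) ≠ 0 := Nat.cast_ne_zero.2 (Nat.factorial_ne_zero p)
              rw [mul_pow]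
              field_simp
              ring_nf
              rw [← mul_pow, ← mul_pow, ← mul_pow, mul_inv_cancel₀ hδ0]; norm_num
      refine h1.trans ?_
      have h2 : ((1:ℝ)/2)^p ≤ ((1:ℝ)/2)^N :=
        pow_le_pow_of_le_one (by norm_num) (by norm_num) hp
      have h3 : (δ*t) ^ p / (m p * (Nat.factorial p : ℝ)) ≤ M := hMge p
      calc ((1:ℝ)/2)^p * ((δ*t) ^ p / (m p * (Nat.factorial p : ℝ)))
          ≤ ((1:ℝ)/2)^N * M := by
            have hd : (0:ℝ) ≤ (δ*t) ^ p / (m p * (Nat.factorial p : ℝ)) :=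
              div_nonneg (by positivity)
                (le_of_lt (mul_pos (hmpos p) (Nat.cast_pos.2 (Nat.factorial_pos p))))
            exact mul_le_mul h2 h3 hd (by positivity)
        _ ≤ (ε/2) * M := mul_le_mul_of_nonneg_right hhalfN hMpos.le
    · -- head case p < N
      have h1 : t ^ p / (ℓ p * (Nat.factorial p : ℝ)) ≤ t ^ p := by
        apply div_le_self (pow_nonneg ht0.le p)
        have h := hℓge p
        have hfac : (1:ℝ) ≤ (Nat.factorial p : ℝ) := by
          exact_mod_cast Nat.one_le_iff_ne_zero.2 (Nat.factorial_ne_zero p)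
        nlinarith
      have h2 : t ^ p ≤ t ^ N := pow_le_pow_right₀ ht1 hp.le
      have h3 : t ^ N ≤ (ε/2) * M := by
        have hfrac : 1 ≤ (ε/2) * δ^(N+1) * t / (m (N+1) * (Nat.factorial (N+1) : ℝ)) := by
          rw [le_div_iff₀ hK, one_mul]
          have : T * (ε * δ^(N+1)) = 2 * (m (N+1) * (Nat.factorial (N+1) : ℝ)) := by
            rw [hT]; field_simp
          nlinarith [mul_le_mul_of_nonneg_right htT (by positivity : (0:ℝ) ≤ ε * δ^(N+1))]
        calc t ^ N = 1 * t ^ N := (one_mul _).symm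
          _ ≤ ((ε/2) * δ^(N+1) * t / (m (N+1) * (Nat.factorial (N+1) : ℝ))) * t ^ N :=
              mul_le_mul_of_nonneg_right hfrac (pow_nonneg ht0.le N)
          _ = (ε/2) * ((δ*t) ^ (N+1) / (m (N+1) * (Nat.factorial (N+1) : ℝ))) := by
              rw [mul_pow, pow_succ]; ring
          _ ≤ (ε/2) * M := mul_le_mul_of_nonneg_left (hMge (N+1)) (by positivity)
      exact h1.trans (h2.trans h3)
  -- conclude
  have hLnonneg : 0 ≤ ⨆ p : ℕ, t ^ p / (ℓ p * (Nat.factorial p : ℝ)) :=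
    le_trans (by positivity) (le_ciSup bddℓ 0)
  rw [Real.norm_eq_abs, abs_of_nonneg (div_nonneg hLnonneg hMpos.le)]
  calc (⨆ p : ℕ, t ^ p / (ℓ p * (Nat.factorial p : ℝ))) / M ≤ (ε/2) := by
        rw [div_le_iff₀ hMpos]; exact hmain
    _ < ε := by linarith
end

section
/- Let n ∈ ℕ and k₁,…,k_n be non-negative integers with k₁ + 2k₂ + … + n·k_n = n, and set k = k₁ + … + k_n. If {m_j} is a sequence of positive reals with m_0 = m_1 = 1 and m_j² ≤ m_{j-1}·m_{j+1} for all j ≥ 1, then m_k · ∏_{ℓ=1}^{n} (m_ℓ)^{k_ℓ} ≤ m_n. -/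
theorem faa_aux_ratio (m : ℕ → ℝ) (hpos : ∀ j, 0 < m j)
    (hconv : ∀ j : ℕ, (m (j + 1)) ^ 2 ≤ m j * m (j + 2)) : ∀ i j, i ≤ j → m (i + 1) * m j ≤ m i * m (j + 1) := by
  intro i j hij
  induction j, hij using Nat.le_induction with
  | base => rw [mul_comm]
  | succ j hij ih =>
    have h := hconv j
    have h1 := hpos j
    have h2 := hpos (j + 1)
    have h3 := hpos i
    have h4 := hpos (i + 1)
    have step1 : m (i + 1) * m j * m (j + 1) ≤ m i * (m (j + 1)) ^ 2 := by
      nlinarith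
    have step2 : m i * (m (j + 1)) ^ 2 ≤ m i * (m j * m (j + 2)) := by
      nlinarith
    nlinarith

theorem faa_aux_shift (m : ℕ → ℝ) (hpos : ∀ j, 0 < m j)
    (hconv : ∀ j : ℕ, (m (j + 1)) ^ 2 ≤ m j * m (j + 2)) : ∀ c a b, a ≤ b → m (a + c) * m b ≤ m a * m (b + c) := by
  intro c
  induction c with
  | zero => intro a b _; simp [mul_comm]
  | succ c ih =>
    intro a b hab
    rw [show a + (c + 1) = (a + c) + 1 by omega, show b + (c + 1) = (b + c) + 1 by omega]
    have hA := faa_aux_ratio m hpos hconv (a + c) (b + c) (by omega)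
    have hI := ih a b hab
    have p1 := hpos (a + c + 1)
    have p2 := hpos (b + c)
    have p3 := hpos b
    have p4 := hpos a
    have p5 := hpos (b + c + 1)
    have p6 := hpos (a + c)
    -- m(a+c+1)*m b * m(b+c) ≤ m(a+c)*m(b+c+1)*m b ≤ m a * m(b+c) * m(b+c+1)
    have key : m (a + c + 1) * m b * m (b + c) ≤ m a * m (b + c + 1) * m (b + c) := by
      calc m (a + c + 1) * m b * m (b + c)
          = (m (a + c + 1) * m (b + c)) * m b := by ring
        _ ≤ (m (a + c) * m (b + c + 1)) * m b := by
            exact mul_le_mul_of_nonneg_right hA (le_of_lt p3)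
        _ = (m (a + c) * m b) * m (b + c + 1) := by ring
        _ ≤ (m a * m (b + c)) * m (b + c + 1) := by
            exact mul_le_mul_of_nonneg_right hI (le_of_lt p5)
        _ = m a * m (b + c + 1) * m (b + c) := by ring
    exact le_of_mul_le_mul_right key p2

theorem faa_aux_single (m : ℕ → ℝ) (hpos : ∀ j, 0 < m j) (h1 : m 1 = 1)
    (hconv : ∀ j : ℕ, (m (j + 1)) ^ 2 ≤ m j * m (j + 2)) : ∀ (kk w : ℕ), 1 ≤ w → m kk * m w ^ kk ≤ m (w * kk) := by
  intro kk w hw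
  induction kk with
  | zero => simp
  | succ kk ih =>
    rw [show w * (kk + 1) = w * kk + w by ring]
    have hE1 := faa_aux_shift m hpos hconv 1 kk (w * kk)
      (Nat.le_mul_of_pos_left kk (by omega))
    have hE2 : m w * m (w * kk + 1) ≤ m (w * kk + w) := by
      have := faa_aux_shift m hpos hconv (w - 1) 1 (w * kk + 1) (by omega)
      rw [show 1 + (w - 1) = w by omega, show w * kk + 1 + (w - 1) = w * kk + w by omega,
        h1, one_mul] at this
      exact this
    have p1 := hpos kk
    have p2 := hpos (w * kk)
    have key : m (kk + 1) * m w ^ (kk + 1) * (m kk * m (w * kk)) ≤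
        m (w * kk + w) * (m kk * m (w * kk)) := by
      calc m (kk + 1) * m w ^ (kk + 1) * (m kk * m (w * kk))
          = (m kk * m w ^ kk) * ((m (kk + 1) * m (w * kk)) * m w) := by ring
        _ ≤ m (w * kk) * ((m kk * m (w * kk + 1)) * m w) := by
            apply mul_le_mul ih
            · apply mul_le_mul_of_nonneg_right hE1 (le_of_lt (hpos w))
            · exact mul_nonneg (mul_nonneg (hpos _).le (hpos _).le) (hpos _).le
            · exact le_of_lt p2
        _ = (m w * m (w * kk + 1)) * (m kk * m (w * kk)) := by ring
        _ ≤ m (w * kk + w) * (m kk * m (w * kk)) := by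
            exact mul_le_mul_of_nonneg_right hE2 (mul_nonneg p1.le p2.le)
    exact le_of_mul_le_mul_right key (mul_pos p1 p2)

theorem faa_aux_combine (m : ℕ → ℝ) (hpos : ∀ j, 0 < m j)
    (hconv : ∀ j : ℕ, (m (j + 1)) ^ 2 ≤ m j * m (j + 2)) (K1 N1 K2 N2 : ℕ) (P1 P2 : ℝ)
    (hK1 : K1 ≤ N1) (hK2 : K2 ≤ N2)
    (hm1 : m K1 * P1 ≤ m N1) (hm2 : m K2 * P2 ≤ m N2)
    (hP1 : 0 ≤ P1) (hP2 : 0 ≤ P2) :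
    m (K1 + K2) * (P1 * P2) ≤ m (N1 + N2) := by
  have hE1 : m (K1 + K2) * m N1 ≤ m K1 * m (N1 + K2) :=
    faa_aux_shift m hpos hconv K2 K1 N1 hK1
  have hE2 : m (N1 + K2) * m N2 ≤ m K2 * m (N1 + N2) := by
    have := faa_aux_shift m hpos hconv N1 K2 N2 hK2
    rw [show K2 + N1 = N1 + K2 by omega, show N2 + N1 = N1 + N2 by omega] at this
    exact this
  have key : m (K1 + K2) * (P1 * P2) * (m K1 * m K2 * (m N1 * m N2)) ≤
      m (N1 + N2) * (m K1 * m K2 * (m N1 * m N2)) := by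
    calc m (K1 + K2) * (P1 * P2) * (m K1 * m K2 * (m N1 * m N2))
        = (m K1 * P1) * (m K2 * P2) * (m (K1 + K2) * (m N1 * m N2)) := by ring
      _ ≤ m N1 * m N2 * (m (K1 + K2) * (m N1 * m N2)) := by
          have hh : (m K1 * P1) * (m K2 * P2) ≤ m N1 * m N2 :=
            mul_le_mul hm1 hm2 (mul_nonneg (hpos _).le hP2) (le_of_lt (hpos N1))
          exact mul_le_mul_of_nonneg_right hh
            (mul_nonneg (hpos _).le (mul_nonneg (hpos _).le (hpos _).le))
      _ = ((m (K1 + K2) * m N1) * m N2) * (m N1 * m N2) := by ring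
      _ ≤ ((m K1 * m (N1 + K2)) * m N2) * (m N1 * m N2) := by
          apply mul_le_mul_of_nonneg_right _ (mul_nonneg (hpos _).le (hpos _).le)
          exact mul_le_mul_of_nonneg_right hE1 (le_of_lt (hpos N2))
      _ = (m K1 * (m (N1 + K2) * m N2)) * (m N1 * m N2) := by ring
      _ ≤ (m K1 * (m K2 * m (N1 + N2))) * (m N1 * m N2) := by
          apply mul_le_mul_of_nonneg_right _ (mul_nonneg (hpos _).le (hpos _).le)
          exact mul_le_mul_of_nonneg_left hE2 (le_of_lt (hpos K1))
      _ = m (N1 + N2) * (m K1 * m K2 * (m N1 * m N2)) := by ring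
  exact le_of_mul_le_mul_right key
    (mul_pos (mul_pos (hpos _) (hpos _)) (mul_pos (hpos _) (hpos _)))

theorem faa_di_bruno_weight_estimate (n : ℕ) (hn : 1 ≤ n) (k : Fin n → ℕ)
    (hk : ∑ i : Fin n, ((i : ℕ) + 1) * k i = n)
    (m : ℕ → ℝ)
    (hpos : ∀ j, 0 < m j) (h0 : m 0 = 1) (h1 : m 1 = 1)
    (hconv : ∀ j : ℕ, (m (j + 1)) ^ 2 ≤ m j * m (j + 2)) :
    m (∑ i : Fin n, k i) * ∏ i : Fin n, (m ((i : ℕ) + 1)) ^ (k i) ≤ m n := by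
  have main : ∀ s : Finset (Fin n),
      m (∑ i ∈ s, k i) * ∏ i ∈ s, (m ((i : ℕ) + 1)) ^ (k i) ≤
        m (∑ i ∈ s, ((i : ℕ) + 1) * k i) := by
    intro s
    induction s using Finset.induction_on with
    | empty => simp [h0]
    | @insert a s ha ih =>
      rw [Finset.sum_insert ha, Finset.prod_insert ha, Finset.sum_insert ha]
      apply faa_aux_combine m hpos hconv
      · exact Nat.le_mul_of_pos_left (k a) (by omega)
      · exact Finset.sum_le_sum fun i _ => Nat.le_mul_of_pos_left (k i) (by omega)
      · exact faa_aux_single m hpos h1 hconv (k a) ((a : ℕ) + 1) (by omega)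
      · exact ih
      · exact pow_nonneg (hpos _).le _
      · exact Finset.prod_nonneg fun i _ => pow_nonneg (hpos _).le _
  have := main Finset.univ
  rwa [hk] at this
end

section
/- For every positive integer n and real R > 0, the sum of k!/(k₁!·k₂!·…·k_n!)·R^k, taken over all tuples (k₁,…,k_n) of non-negative integers with k₁ + 2k₂ + … + n·k_n = n and with k = k₁ + … + k_n, equals R·(1+R)^{n−1}. -/
open Polynomial Finset

noncomputable def qq (n : ℕ) (R : ℝ) : ℝ[X] := ∑ i : Fin n, C R * X ^ ((i : ℕ) + 1)

lemma qq_pow (n : ℕ) (R : ℝ) (k : ℕ) :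
    (qq n R) ^ k = ∑ f ∈ Finset.piAntidiag Finset.univ k,
      C ((Nat.multinomial Finset.univ f : ℝ) * R ^ k) *
        X ^ (∑ i : Fin n, ((i : ℕ) + 1) * f i) := by
  rw [qq, Finset.sum_pow_eq_sum_piAntidiag]
  refine Finset.sum_congr rfl fun f hf => ?_
  obtain ⟨hsum, -⟩ := Finset.mem_piAntidiag.1 hf
  have h1 : ∏ i : Fin n, (C R * X ^ ((i : ℕ) + 1)) ^ f i
      = C (R ^ k) * X ^ (∑ i : Fin n, ((i : ℕ) + 1) * f i) := by
    simp_rw [mul_pow, ← C_pow, ← pow_mul, Finset.prod_mul_distrib, ← map_prod,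
      Finset.prod_pow_eq_pow_sum, hsum]
  rw [h1, ← Polynomial.C_eq_natCast, ← mul_assoc, ← C_mul]

noncomputable def SS (n : ℕ) (R : ℝ) : ℝ[X] := ∑ k ∈ Finset.range (n + 1), (qq n R) ^ k

lemma cast_multinomial (n : ℕ) (f : Fin n → ℕ) :
    (Nat.multinomial Finset.univ f : ℝ)
      = (Nat.factorial (∑ i : Fin n, f i) : ℝ) / (∏ i : Fin n, (Nat.factorial (f i) : ℝ)) := by
  have h := Nat.multinomial_spec Finset.univ f
  have hpos : (0:ℝ) < ∏ i : Fin n, (Nat.factorial (f i) : ℝ) :=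
    Finset.prod_pos fun i _ => by exact_mod_cast (f i).factorial_pos
  rw [eq_div_iff hpos.ne', mul_comm]
  exact_mod_cast congrArg (Nat.cast : ℕ → ℝ) h

lemma coeff_SS (n : ℕ) (R : ℝ) :
    (SS n R).coeff n = ∑ k ∈ (Fintype.piFinset fun _ : Fin n => Finset.range (n + 1)).filter
        (fun k : Fin n → ℕ => ∑ i : Fin n, ((i : ℕ) + 1) * k i = n),
      (Nat.factorial (∑ i : Fin n, k i) : ℝ) /
          (∏ i : Fin n, (Nat.factorial (k i) : ℝ)) * R ^ (∑ i : Fin n, k i) := by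
  have step1 : (SS n R).coeff n
      = ∑ k ∈ Finset.range (n + 1), ∑ f ∈ Finset.piAntidiag (Finset.univ : Finset (Fin n)) k,
          (if ∑ i : Fin n, ((i : ℕ) + 1) * f i = n
            then (Nat.multinomial Finset.univ f : ℝ) * R ^ (∑ i : Fin n, f i) else 0) := by
    rw [SS, Polynomial.finset_sum_coeff]
    refine Finset.sum_congr rfl fun k hk => ?_
    rw [qq_pow, Polynomial.finset_sum_coeff]
    refine Finset.sum_congr rfl fun f hf => ?_
    obtain ⟨hsum, -⟩ := Finset.mem_piAntidiag.1 hf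
    rw [Polynomial.coeff_C_mul, Polynomial.coeff_X_pow, hsum]
    by_cases h : ∑ i : Fin n, ((i : ℕ) + 1) * f i = n
    · simp [h]
    · simp [h, Ne.symm h]
  rw [step1, ← Finset.sum_biUnion (by
    intro a ha b hb hab
    refine Finset.disjoint_left.2 fun f hfa hfb => hab ?_
    obtain ⟨ha1, -⟩ := Finset.mem_piAntidiag.1 hfa
    obtain ⟨hb1, -⟩ := Finset.mem_piAntidiag.1 hfb
    rw [← ha1, ← hb1])]
  have hsub : (Fintype.piFinset fun _ : Fin n => Finset.range (n + 1)).filter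
        (fun k : Fin n → ℕ => ∑ i : Fin n, ((i : ℕ) + 1) * k i = n)
      ⊆ (Finset.range (n + 1)).biUnion
          (fun k => Finset.piAntidiag (Finset.univ : Finset (Fin n)) k) := by
    intro f hf
    obtain ⟨hf1, hf2⟩ := Finset.mem_filter.1 hf
    have hle : ∑ i : Fin n, f i ≤ n := by
      calc ∑ i : Fin n, f i ≤ ∑ i : Fin n, ((i : ℕ) + 1) * f i :=
            Finset.sum_le_sum fun i _ => Nat.le_mul_of_pos_left _ (Nat.succ_pos _)
        _ = n := hf2
    exact Finset.mem_biUnion.2 ⟨∑ i : Fin n, f i, Finset.mem_range.2 (Nat.lt_succ_of_le hle),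
      Finset.mem_piAntidiag.2 ⟨rfl, fun i _ => Finset.mem_univ i⟩⟩
  rw [← Finset.sum_subset hsub (fun f hf hnf => ?_)]
  · refine Finset.sum_congr rfl fun f hf => ?_
    obtain ⟨hf1, hf2⟩ := Finset.mem_filter.1 hf
    rw [if_pos hf2, cast_multinomial]
  · rw [if_neg]
    intro h
    refine hnf (Finset.mem_filter.2 ⟨Fintype.mem_piFinset.2 fun i => ?_, h⟩)
    refine Finset.mem_range.2 (Nat.lt_succ_of_le ?_)
    calc f i ≤ ((i : ℕ) + 1) * f i := Nat.le_mul_of_pos_left _ (Nat.succ_pos _)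
      _ ≤ ∑ j : Fin n, ((j : ℕ) + 1) * f j :=
          Finset.single_le_sum (f := fun j : Fin n => ((j : ℕ) + 1) * f j)
            (fun j _ => Nat.zero_le _) (Finset.mem_univ i)
      _ = n := h

lemma SS_coeff_zero (n : ℕ) (R : ℝ) : (SS n R).coeff 0 = 1 := by
  rw [Polynomial.coeff_zero_eq_eval_zero, SS]
  have hq : Polynomial.eval 0 (qq n R) = 0 := by
    simp [qq, Polynomial.eval_finset_sum]
  rw [Polynomial.eval_finset_sum]
  simp only [Polynomial.eval_pow, hq]
  rw [Finset.sum_eq_single 0]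
  · exact pow_zero 0
  · intro k _ hk; exact zero_pow hk
  · intro h; exact absurd (Finset.mem_range.2 (Nat.succ_pos n)) h

lemma qq_factor (n : ℕ) (R : ℝ) :
    qq n R = (∑ i : Fin n, C R * X ^ (i : ℕ)) * X := by
  rw [Finset.sum_mul]
  exact Finset.sum_congr rfl fun i _ => by rw [mul_assoc, ← pow_succ]

lemma SS_rec (n : ℕ) (R : ℝ) (m : ℕ) (hm : 1 ≤ m) (hmn : m ≤ n) :
    (SS n R).coeff m = ∑ i ∈ Finset.range m, R * (SS n R).coeff (m - (i + 1)) := by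
  have hg : SS n R * (qq n R - 1) = (qq n R) ^ (n + 1) - 1 := geom_sum_mul (qq n R) (n + 1)
  have hrhs : ((qq n R) ^ (n + 1) - 1).coeff m = 0 := by
    rw [Polynomial.coeff_sub, qq_factor, mul_pow, Polynomial.coeff_mul_X_pow',
      if_neg (by omega), Polynomial.coeff_one, if_neg (by omega), sub_zero]
  have hl : (SS n R * (qq n R - 1)).coeff m
      = (SS n R * qq n R).coeff m - (SS n R).coeff m := by
    rw [mul_sub, mul_one, Polynomial.coeff_sub]
  have key : (SS n R).coeff m = (SS n R * qq n R).coeff m := by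
    have := hg ▸ hl
    rw [hrhs] at this
    linarith [this]
  rw [key, qq, Finset.mul_sum]
  have hterm : ∀ i : Fin n, (SS n R * (C R * X ^ ((i : ℕ) + 1))).coeff m
      = if (i : ℕ) + 1 ≤ m then R * (SS n R).coeff (m - ((i : ℕ) + 1)) else 0 := by
    intro i
    rw [show SS n R * (C R * X ^ ((i : ℕ) + 1)) = (C R * SS n R) * X ^ ((i : ℕ) + 1) by ring,
      Polynomial.coeff_mul_X_pow']
    split_ifs with h
    · rw [Polynomial.coeff_C_mul]
    · rfl
  rw [Polynomial.finset_sum_coeff]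
  simp only [hterm]
  rw [Fin.sum_univ_eq_sum_range (fun i => if i + 1 ≤ m then R * (SS n R).coeff (m - (i + 1)) else 0)]
  rw [← Finset.sum_subset (Finset.range_subset_range.2 hmn) (fun i _ hi => by
    rw [if_neg]; rw [Finset.mem_range] at hi; omega)]
  refine Finset.sum_congr rfl fun i hi => ?_
  rw [Finset.mem_range] at hi
  rw [if_pos (by omega)]

lemma SS_coeff (n : ℕ) (R : ℝ) (hR : R ≠ 0) :
    ∀ m, m ≤ n → (SS n R).coeff m = if m = 0 then 1 else R * (1 + R) ^ (m - 1) := by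
  intro m
  induction m using Nat.strong_induction_on with
  | _ m ih =>
    intro hmn
    rcases Nat.eq_zero_or_pos m with h0 | h1
    · subst h0; rw [if_pos rfl]; exact SS_coeff_zero n R
    · obtain ⟨t, rfl⟩ : ∃ t, m = t + 1 := ⟨m - 1, by omega⟩
      rw [if_neg (by omega)]
      rw [SS_rec n R _ h1 hmn, ← Finset.mul_sum]
      have hre : ∀ i ∈ Finset.range (t + 1),
          (SS n R).coeff (t + 1 - (i + 1)) = (SS n R).coeff (t + 1 - 1 - i) := by
        intro i _; congr 1; omega
      rw [Finset.sum_congr rfl hre,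
        Finset.sum_range_reflect (fun j => (SS n R).coeff j) (t + 1)]
      have hval : ∀ j ∈ Finset.range (t + 1),
          (SS n R).coeff j = if j = 0 then 1 else R * (1 + R) ^ (j - 1) := by
        intro j hj
        rw [Finset.mem_range] at hj
        exact ih j (by omega) (by omega)
      rw [Finset.sum_congr rfl hval, Finset.sum_range_succ']
      have hgeo : ∑ j ∈ Finset.range t,
          (if j + 1 = 0 then (1:ℝ) else R * (1 + R) ^ (j + 1 - 1)) = (1 + R) ^ t - 1 := by
        have h := geom_sum_mul (1 + R) t
        simp only [add_sub_cancel_left] at h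
        calc ∑ j ∈ Finset.range t, (if j + 1 = 0 then (1:ℝ) else R * (1 + R) ^ (j + 1 - 1))
            = ∑ j ∈ Finset.range t, (1 + R) ^ j * R := by
              refine Finset.sum_congr rfl fun j _ => ?_
              rw [if_neg (Nat.succ_ne_zero j), Nat.add_sub_cancel, mul_comm]
          _ = (∑ j ∈ Finset.range t, (1 + R) ^ j) * R := by rw [Finset.sum_mul]
          _ = (1 + R) ^ t - 1 := h
      rw [hgeo, if_pos rfl, show t + 1 - 1 = t from by omega]
      ring

theorem multinomial_partition_identity (n : ℕ) (hn : 1 ≤ n) (R : ℝ) (hR : 0 < R) :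
    ∑ k ∈ (Fintype.piFinset fun _ : Fin n => Finset.range (n + 1)).filter
        (fun k : Fin n → ℕ => ∑ i : Fin n, ((i : ℕ) + 1) * k i = n),
      (Nat.factorial (∑ i : Fin n, k i) : ℝ) /
          (∏ i : Fin n, (Nat.factorial (k i) : ℝ)) * R ^ (∑ i : Fin n, k i)
      = R * (1 + R) ^ (n - 1) := by
  rw [← coeff_SS n R, SS_coeff n R hR.ne' n le_rfl, if_neg (by omega)]
end

section
/- Let {m_n} be a weight sequence. Let {a_ξ}_{ξ∈ℤ^N} and {b_ξ}_{ξ∈ℤ^N} be families of complex numbers such that there exist C, C', δ > 0 with |b_ξ| ≤ C·inf_{n} (m_n·n!)/(δⁿ(1+|ξ|)ⁿ) for all ξ, and |a_ξ| ≤ C'·sup_{n} εⁿ(1+|ξ|)ⁿ/(m_n·n!) for ε = δ/H (H the moderate growth constant). Then Σ_{ξ∈ℤ^N} |a_ξ|·|b_ξ| < ∞. -/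
lemma fact_add_le (n k : ℕ) : ((n + k).factorial : ℝ) ≤ (n.factorial : ℝ) * ((n : ℝ) + k) ^ k := by
  induction k with
  | zero => simp
  | succ k ih =>
    have h1 : ((n + (k+1)).factorial : ℝ) = ((n:ℝ) + (k+1)) * ((n+k).factorial : ℝ) := by
      rw [show n + (k+1) = (n+k) + 1 by ring, Nat.factorial_succ]
      push_cast; ring
    have h2 : ((n:ℝ) + k) ^ k ≤ ((n:ℝ) + (k+1)) ^ k := by
      apply pow_le_pow_left₀ (by positivity) (by push_cast; linarith)
    have key : ((n + (k+1)).factorial : ℝ) ≤ (n.factorial : ℝ) * ((n:ℝ) + ((k:ℝ)+1)) ^ (k+1) :=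
      calc ((n + (k+1)).factorial : ℝ) = ((n:ℝ) + ((k:ℝ)+1)) * ((n+k).factorial : ℝ) := h1
        _ ≤ ((n:ℝ) + ((k:ℝ)+1)) * ((n.factorial : ℝ) * ((n:ℝ)+k)^k) := by
            apply mul_le_mul_of_nonneg_left ih (by positivity)
        _ ≤ (n.factorial : ℝ) * ((n:ℝ) + ((k:ℝ)+1)) ^ (k+1) := by
            rw [pow_succ]
            nlinarith [mul_le_mul_of_nonneg_left h2
              (show (0:ℝ) ≤ (n.factorial:ℝ)*((n:ℝ)+((k:ℝ)+1)) by positivity)]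
    push_cast
    push_cast at key
    linarith
  
lemma int_summable : Summable fun n : ℤ => 1 / (1 + |(n:ℝ)|) ^ 2 := by
  have hnat : Summable fun n : ℕ => 1 / ((n:ℝ) + 1) ^ 2 := by
    have := (summable_nat_add_iff (f := fun n : ℕ => 1 / (n:ℝ)^2) 1).2
      (Real.summable_one_div_nat_pow.2 (by norm_num))
    exact this.congr (by intro n; push_cast; ring_nf)
  apply Summable.of_nat_of_neg
  · exact hnat.congr (by intro n; simp; ring_nf)
  · exact hnat.congr (by intro n; simp [abs_of_nonneg]; ring_nf)

lemma pi_summable (N : ℕ) : Summable fun ξ : Fin N → ℤ => ∏ i, 1 / (1 + |((ξ i):ℝ)|) ^ 2 := by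
  induction N with
  | zero => exact .of_finite
  | succ n ih =>
    have h := int_summable.mul_of_nonneg ih (fun x => by positivity) (fun x => by
      apply Finset.prod_nonneg; intro i _; positivity)
    have := ((Fin.consEquiv (fun _ : Fin (n+1) => ℤ)).symm.summable_iff
      (f := fun p : ℤ × (Fin n → ℤ) => 1 / (1 + |(p.1:ℝ)|)^2 * ∏ i, 1/(1 + |(p.2 i:ℝ)|)^2)).2 h
    exact this.congr (by intro ξ; simp [Fin.consEquiv, Fin.prod_univ_succ, Fin.tail]; ring)

set_option maxHeartbeats 1000000 in
theorem fourier_pairing_summable (N : ℕ) (hN : 1 ≤ N)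
    (m : ℕ → ℝ) (H : ℝ)
    (hpos : ∀ n, 0 < m n) (h0 : m 0 = 1) (h1 : m 1 = 1)
    (hconv : ∀ n : ℕ, (m (n + 1)) ^ 2 ≤ m n * m (n + 2))
    (hH : 1 < H)
    (hmod : ∀ j k : ℕ, m (j + k) ≤ H ^ (j + k) * m j * m k)
    (a b : (Fin N → ℤ) → ℂ) (C C' δ : ℝ) (hC : 0 < C) (hC' : 0 < C') (hδ : 0 < δ)
    (hb : ∀ ξ : Fin N → ℤ, ‖b ξ‖ ≤
      C * ⨅ n : ℕ, (m n * (Nat.factorial n : ℝ)) / (δ ^ n * (1 + ‖ξ‖) ^ n))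
    (ha : ∀ ξ : Fin N → ℤ, ‖a ξ‖ ≤
      C' * ⨆ n : ℕ, (δ / H) ^ n * (1 + ‖ξ‖) ^ n / (m n * (Nat.factorial n : ℝ))) :
    Summable fun ξ : Fin N → ℤ => ‖a ξ‖ * ‖b ξ‖ := by
  have hH0 : (0:ℝ) < H := lt_trans one_pos hH
  have hH' : H ≠ 0 := hH0.ne'
  have hδ' : δ ≠ 0 := hδ.ne'
  have hlogH : 0 < Real.log H := Real.log_pos hH
  set K1 : ℝ := ((4*N).factorial : ℝ) / (Real.log H) ^ (4*N) with hK1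
  set K2 : ℝ := H ^ (4*N) * m (4*N) * ((4*N:ℝ)+1) ^ (4*N) / δ ^ (4*N) with hK2
  have hK1pos : 0 < K1 := by positivity
  have hK2pos : 0 < K2 := by have := hpos (4*N); positivity
  set K : ℝ := K1 + K2 with hKdef
  have hKpos : 0 < K := by positivity
  have key : ∀ ξ : Fin N → ℤ, ‖a ξ‖ * ‖b ξ‖ ≤
      C * C' * K * ∏ i, 1 / (1 + |((ξ i):ℝ)|) ^ 2 := by
    intro ξ
    set t : ℝ := 1 + ‖ξ‖ with ht
    have ht1 : 1 ≤ t := le_add_of_nonneg_right (norm_nonneg ξ)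
    have ht0 : 0 < t := lt_of_lt_of_le one_pos ht1
    have ht' : t ≠ 0 := ht0.ne'
    set f : ℕ → ℝ := fun n => (m n * (Nat.factorial n : ℝ)) / (δ ^ n * t ^ n) with hf
    set g : ℕ → ℝ := fun n => (δ / H) ^ n * t ^ n / (m n * (Nat.factorial n : ℝ)) with hg
    have hfpos : ∀ n, 0 < f n := fun n => by
      have h1 := hpos n
      have h2 : (0:ℝ) < (Nat.factorial n : ℝ) := by positivity
      simp only [hf]; positivity
    have hgpos : ∀ n, 0 < g n := fun n => by
      have h1 := hpos n
      have h2 : (0:ℝ) < (Nat.factorial n : ℝ) := by positivity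
      simp only [hg]; positivity
    set I : ℝ := ⨅ n, f n with hI
    set S : ℝ := ⨆ n, g n with hS
    have hIbdd : BddBelow (Set.range f) := ⟨0, by rintro x ⟨n, rfl⟩; exact (hfpos n).le⟩
    have hInonneg : 0 ≤ I := Real.iInf_nonneg fun n => (hfpos n).le
    have hIle : ∀ k, I ≤ f k := fun k => ciInf_le hIbdd k
    have hsqt1 : 1 ≤ Real.sqrt t := by
      rw [show (1:ℝ) = Real.sqrt 1 by simp]
      exact Real.sqrt_le_sqrt ht1
    have hsqpow : (Real.sqrt t) ^ (4*N) = t ^ (2*N) := by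
      rw [show 4*N = 2*(2*N) by ring, pow_mul, Real.sq_sqrt ht0.le]
    have hkey : ∀ n, g n * I ≤ K / t ^ (2*N) := by
      intro n
      have h1 : m n ≠ 0 := (hpos n).ne'
      have h2 : (Nat.factorial n : ℝ) ≠ 0 := by positivity
      rcases le_or_gt (Real.sqrt t) (n:ℝ) with hn | hn
      · -- case n ≥ sqrt t
        have hfn : g n * f n = (1 / H) ^ n := by
          simp only [hf, hg]
          field_simp
          ring
        have hle1 : g n * I ≤ (1/H) ^ n := by
          rw [← hfn]
          exact mul_le_mul_of_nonneg_left (hIle n) (hgpos n).le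
        have hexp : t ^ (2*N) * (Real.log H) ^ (4*N) ≤ ((4*N).factorial : ℝ) * H ^ n := by
          have hfac : (0:ℝ) < ((4*N).factorial : ℝ) := by positivity
          have e1 : (Real.sqrt t * Real.log H) ^ (4*N) / ((4*N).factorial : ℝ)
              ≤ Real.exp (Real.sqrt t * Real.log H) :=
            Real.pow_div_factorial_le_exp _ (by positivity) (4*N)
          rw [div_le_iff₀ hfac] at e1
          have e2 : Real.exp (Real.sqrt t * Real.log H) = H ^ (Real.sqrt t) := by
            rw [Real.rpow_def_of_pos hH0, mul_comm]
          have e3 : H ^ (Real.sqrt t) ≤ H ^ ((n:ℝ)) :=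
            Real.rpow_le_rpow_of_exponent_le hH.le hn
          have e4 : H ^ ((n:ℝ)) = H ^ n := Real.rpow_natCast H n
          calc t ^ (2*N) * (Real.log H) ^ (4*N)
              = (Real.sqrt t * Real.log H) ^ (4*N) := by rw [mul_pow, hsqpow]
            _ ≤ Real.exp (Real.sqrt t * Real.log H) * ((4*N).factorial : ℝ) := e1
            _ = H ^ (Real.sqrt t) * ((4*N).factorial : ℝ) := by rw [e2]
            _ ≤ H ^ ((n:ℝ)) * ((4*N).factorial : ℝ) :=
                mul_le_mul_of_nonneg_right e3 hfac.le
            _ = ((4*N).factorial : ℝ) * H ^ n := by rw [e4]; ring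
        have hle2 : (1/H) ^ n ≤ K1 / t ^ (2*N) := by
          rw [one_div_pow, hK1, div_le_div_iff₀ (by positivity) (by positivity),
            div_mul_eq_mul_div, le_div_iff₀ (by positivity)]
          calc 1 * t^(2*N) * (Real.log H)^(4*N) = t^(2*N) * (Real.log H)^(4*N) := by ring
            _ ≤ ((4*N).factorial : ℝ) * H ^ n := hexp
        have hlast : K1 / t ^ (2*N) ≤ K / t ^ (2*N) := by gcongr; linarith
        exact (hle1.trans hle2).trans hlast
      · -- case n < sqrt t
        have hle1 : g n * I ≤ g n * f (n + 4*N) :=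
          mul_le_mul_of_nonneg_left (hIle (n + 4*N)) (hgpos n).le
        have heq : g n * f (n + 4*N) = (m (n+4*N) * ((n+4*N).factorial : ℝ)) /
            ((m n * (Nat.factorial n : ℝ)) * (H ^ n * δ ^ (4*N) * t ^ (4*N))) := by
          simp only [hf, hg]
          have h3 : m (n+4*N) ≠ 0 := (hpos _).ne'
          field_simp
          have hHn : H ^ n * H⁻¹ ^ n = 1 := by rw [← mul_pow, mul_inv_cancel₀ hH', one_pow]
          linear_combination (δ ^ n * δ ^ (N * 4) * t ^ n * t ^ (N * 4)) * hHn
        have hnum : m (n+4*N) * ((n+4*N).factorial : ℝ) ≤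
            (H ^ (n+4*N) * m n * m (4*N)) *
              ((Nat.factorial n : ℝ) * (((4*N:ℝ)+1) * Real.sqrt t) ^ (4*N)) := by
          have b1 := hmod n (4*N)
          have b2 : ((n+4*N).factorial : ℝ) ≤ (Nat.factorial n : ℝ) * ((n:ℝ) + (4*N:ℕ)) ^ (4*N) :=
            fact_add_le n (4*N)
          have b3 : ((n:ℝ) + ((4*N:ℕ):ℝ)) ^ (4*N) ≤ (((4*N:ℝ)+1) * Real.sqrt t) ^ (4*N) := by
            apply pow_le_pow_left₀ (by positivity)
            push_cast
            nlinarith [hsqt1, hn.le]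
          have hb2' : ((n+4*N).factorial : ℝ) ≤
              (Nat.factorial n : ℝ) * (((4*N:ℝ)+1) * Real.sqrt t) ^ (4*N) :=
            b2.trans (mul_le_mul_of_nonneg_left b3 (by positivity))
          apply mul_le_mul b1 hb2' (by positivity)
          have hp1 := hpos n; have hp2 := hpos (4*N); positivity
        have hden : (0:ℝ) < (m n * (Nat.factorial n : ℝ)) * (H ^ n * δ ^ (4*N) * t ^ (4*N)) := by
          have hp1 := hpos n
          have hp2 : (0:ℝ) < (Nat.factorial n : ℝ) := by positivity
          positivity
        have heq2 : ((H ^ (n+4*N) * m n * m (4*N)) *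
              ((Nat.factorial n : ℝ) * (((4*N:ℝ)+1) * Real.sqrt t) ^ (4*N))) /
            ((m n * (Nat.factorial n : ℝ)) * (H ^ n * δ ^ (4*N) * t ^ (4*N))) = K2 / t ^ (2*N) := by
          rw [hK2, mul_pow, hsqpow]
          have h4 : t ^ (4*N) = t ^ (2*N) * t ^ (2*N) := by rw [← pow_add]; ring_nf
          rw [h4, pow_add]
          field_simp
        have hle2 : g n * f (n + 4*N) ≤ K2 / t ^ (2*N) := by
          rw [heq, ← heq2]
          gcongr
        have hlast : K2 / t ^ (2*N) ≤ K / t ^ (2*N) := by gcongr; linarith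
        exact (hle1.trans hle2).trans hlast
    have hSI : S * I ≤ K / t ^ (2*N) := by
      rcases eq_or_lt_of_le hInonneg with hI0 | hI0
      · rw [← hI0, mul_zero]; positivity
      · have hSle : S ≤ (K / t ^ (2*N)) / I := by
          apply Real.iSup_le _ (by positivity)
          intro n
          rw [le_div_iff₀ hI0]
          exact hkey n
        calc S * I ≤ ((K / t ^ (2*N)) / I) * I := mul_le_mul_of_nonneg_right hSle hInonneg
          _ = K / t ^ (2*N) := div_mul_cancel₀ _ hI0.ne'
    have hSnonneg : 0 ≤ S := Real.iSup_nonneg' ⟨0, (hgpos 0).le⟩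
    have hab : ‖a ξ‖ * ‖b ξ‖ ≤ (C' * S) * (C * I) := by
      apply mul_le_mul (ha ξ) (hb ξ) (norm_nonneg _)
      positivity
    have hprod : 1 / t ^ (2*N) ≤ ∏ i, 1 / (1 + |((ξ i):ℝ)|) ^ 2 := by
      have e1 : ∏ i, (1:ℝ) / (1 + |((ξ i):ℝ)|) ^ 2 = 1 / ∏ i, (1 + |((ξ i):ℝ)|) ^ 2 := by
        simp [Finset.prod_inv_distrib, one_div]
      have e2 : ∏ i, ((1:ℝ) + |((ξ i):ℝ)|) ^ 2 ≤ t ^ (2*N) := by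
        have : ∀ i : Fin N, ((1:ℝ) + |((ξ i):ℝ)|) ^ 2 ≤ t ^ 2 := by
          intro i
          apply pow_le_pow_left₀ (by positivity)
          have : |((ξ i):ℝ)| = ‖ξ i‖ := by rw [← Real.norm_eq_abs, Int.norm_cast_real]
          rw [ht, this]
          have := norm_le_pi_norm ξ i
          linarith
        calc ∏ i, ((1:ℝ) + |((ξ i):ℝ)|) ^ 2 ≤ ∏ _i : Fin N, t ^ 2 :=
              Finset.prod_le_prod (fun i _ => by positivity) (fun i _ => this i)
          _ = (t ^ 2) ^ N := by rw [Finset.prod_const, Finset.card_univ, Fintype.card_fin]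
          _ = t ^ (2*N) := by rw [← pow_mul]
      rw [e1]
      exact one_div_le_one_div_of_le (Finset.prod_pos fun i _ => by positivity) e2
    calc ‖a ξ‖ * ‖b ξ‖ ≤ (C' * S) * (C * I) := hab
      _ = C * C' * (S * I) := by ring
      _ ≤ C * C' * (K / t ^ (2*N)) := by
          apply mul_le_mul_of_nonneg_left hSI (by positivity)
      _ = (C * C' * K) * (1 / t ^ (2*N)) := by ring
      _ ≤ C * C' * K * ∏ i, 1 / (1 + |((ξ i):ℝ)|) ^ 2 := by
          apply mul_le_mul_of_nonneg_left hprod (by positivity)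
  apply Summable.of_nonneg_of_le (fun ξ => mul_nonneg (norm_nonneg _) (norm_nonneg _)) key
  exact (pi_summable N).mul_left _
end

section
/- Let {m_n} be a weight sequence with moderate growth constant H. Suppose {b_ξ}_{ξ∈ℤ^N} are complex numbers with |b_ξ| ≤ C·inf_{n∈ℕ₀} (m_n·n!)/(δⁿ·(1+|ξ|)ⁿ) for some C, δ > 0 and all ξ. Then for every multi-index α ∈ ℕ₀^N, Σ_{ξ∈ℤ^N} |ξ|^{|α|}·|b_ξ| ≤ C₁·h₁^{|α|}·m_{|α|}·|α|! where C₁, h₁ > 0 depend only on C, δ, N, and the constants of the weight sequence. -/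
lemma sumNat : Summable (fun n : ℕ => ((1 + |(n:ℝ)|)^2)⁻¹) := by
  have h := (Real.summable_one_div_nat_pow (p := 2)).2 one_lt_two
  have h2 := (summable_nat_add_iff 1).2 h
  apply h2.congr
  intro n
  simp [abs_of_nonneg (by positivity : (0:ℝ) ≤ (n:ℝ))]
  ring_nf

lemma sumInt : Summable (fun n : ℤ => ((1 + |(n:ℝ)|)^2)⁻¹) := by
  apply Summable.of_nat_of_neg
  · exact sumNat.congr (by intro n; norm_num)
  · apply sumNat.congr; intro n; push_cast; rw [abs_neg]

lemma sumPi (N : ℕ) : Summable (fun ξ : Fin N → ℤ => ∏ i, ((1 + |((ξ i : ℤ):ℝ)|)^2)⁻¹) := by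
  induction N with
  | zero => exact summable_of_finite_support (Set.toFinite _)
  | succ n ih =>
      have hmul := (sumInt.mul_of_nonneg ih (fun x => by positivity)
        (fun x => Finset.prod_nonneg fun i _ => by positivity))
      have := hmul.comp_injective (Fin.consEquiv (fun _ : Fin (n+1) => ℤ)).symm.injective
      apply this.congr
      intro ξ
      simp [Fin.consEquiv, Fin.prod_univ_succ, Fin.tail, mul_comm]

theorem fourier_coefficients_derivative_bound (N : ℕ) (hN : 1 ≤ N)
    (m : ℕ → ℝ) (H : ℝ)
    (hpos : ∀ n, 0 < m n) (h0 : m 0 = 1) (h1 : m 1 = 1)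
    (hconv : ∀ n : ℕ, (m (n + 1)) ^ 2 ≤ m n * m (n + 2))
    (hH : 1 < H)
    (hmod : ∀ j k : ℕ, m (j + k) ≤ H ^ (j + k) * m j * m k)
    (b : (Fin N → ℤ) → ℂ) (C δ : ℝ) (hC : 0 < C) (hδ : 0 < δ)
    (hb : ∀ ξ : Fin N → ℤ, ‖b ξ‖ ≤
      C * ⨅ n : ℕ, (m n * (Nat.factorial n : ℝ)) / (δ ^ n * (1 + ‖ξ‖) ^ n)) :
    ∃ C₁ h₁ : ℝ, 0 < C₁ ∧ 0 < h₁ ∧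
      ∀ α : Fin N → ℕ,
        (Summable fun ξ : Fin N → ℤ => ‖ξ‖ ^ (∑ i, α i) * ‖b ξ‖) ∧
        (∑' ξ : Fin N → ℤ, ‖ξ‖ ^ (∑ i, α i) * ‖b ξ‖) ≤
          C₁ * h₁ ^ (∑ i, α i) * m (∑ i, α i) * (Nat.factorial (∑ i, α i) : ℝ) := by
  classical
  have hH0 : (0:ℝ) < H := lt_trans one_pos hH
  set g : (Fin N → ℤ) → ℝ := fun ξ => ((1 + ‖ξ‖)^(2*N))⁻¹ with hgdef
  have htpos : ∀ ξ : Fin N → ℤ, (0:ℝ) < 1 + ‖ξ‖ := fun ξ => by positivity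
  have hg : Summable g := by
    apply (sumPi N).of_nonneg_of_le (fun ξ => by positivity)
    intro ξ
    have habs : ∀ i, (1 + |((ξ i : ℤ):ℝ)|) ≤ 1 + ‖ξ‖ := by
      intro i
      have := norm_le_pi_norm ξ i
      rw [Int.norm_eq_abs] at this
      push_cast at this ⊢
      linarith
    calc g ξ = (∏ _i : Fin N, (1 + ‖ξ‖)^2)⁻¹ := by
            rw [Finset.prod_const, ← pow_mul]
            simp [hgdef, mul_comm]
      _ ≤ ∏ i, ((1 + |((ξ i : ℤ):ℝ)|)^2)⁻¹ := by
            rw [← Finset.prod_inv_distrib]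
            apply Finset.prod_le_prod (fun i _ => by positivity)
            intro i _
            apply inv_anti₀ (by positivity)
            have h' := habs i
            have h0' : (0:ℝ) ≤ 1 + |((ξ i : ℤ):ℝ)| := by positivity
            exact pow_le_pow_left₀ h0' h' 2
  have hgnonneg : ∀ ξ, 0 ≤ g ξ := fun ξ => by positivity
  have hS : 0 < ∑' ξ, g ξ := by
    apply Summable.tsum_pos hg hgnonneg (0 : Fin N → ℤ)
    simp [hgdef]
  set S := ∑' ξ, g ξ with hSdef
  refine ⟨C * m (2*N) * (Nat.factorial (2*N) : ℝ) * (2*H/δ)^(2*N) * S, 2*H/δ,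
    by have := hpos (2*N); have := Nat.factorial_pos (2*N); positivity,
    by positivity, ?_⟩
  intro α
  set k := ∑ i, α i with hk
  -- pointwise bound
  have hbd : ∀ ξ : Fin N → ℤ, ‖ξ‖^k * ‖b ξ‖ ≤
      (C * m (k+2*N) * (Nat.factorial (k+2*N) : ℝ) / δ^(k+2*N)) * g ξ := by
    intro ξ
    set t := 1 + ‖ξ‖ with htdef
    have ht1 : (1:ℝ) ≤ t := by simp [htdef, norm_nonneg]
    have ht0 : (0:ℝ) < t := htpos ξ
    have hb' : ‖b ξ‖ ≤ C * ((m (k+2*N) * (Nat.factorial (k+2*N) : ℝ))/(δ^(k+2*N) * t^(k+2*N))) := by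
      refine (hb ξ).trans ?_
      apply mul_le_mul_of_nonneg_left _ hC.le
      exact ciInf_le ⟨0, by rintro x ⟨n, rfl⟩; have := hpos n; positivity⟩ (k+2*N)
    have hfrac : ‖ξ‖^k / t^(k+2*N) ≤ (t^(2*N))⁻¹ := by
      rw [div_le_iff₀ (by positivity)]
      have heq : (t^(2*N))⁻¹ * t^(k+2*N) = t^k := by
        rw [pow_add]; field_simp
      rw [heq]
      exact pow_le_pow_left₀ (norm_nonneg ξ) (by simp [htdef, le_add_of_nonneg_right, norm_nonneg]) k
    calc ‖ξ‖^k * ‖b ξ‖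
        ≤ ‖ξ‖^k * (C * ((m (k+2*N) * (Nat.factorial (k+2*N) : ℝ))/(δ^(k+2*N) * t^(k+2*N)))) :=
          mul_le_mul_of_nonneg_left hb' (by positivity)
      _ = (C * m (k+2*N) * (Nat.factorial (k+2*N) : ℝ) / δ^(k+2*N)) * (‖ξ‖^k / t^(k+2*N)) := by
          ring
      _ ≤ (C * m (k+2*N) * (Nat.factorial (k+2*N) : ℝ) / δ^(k+2*N)) * (t^(2*N))⁻¹ := by
          apply mul_le_mul_of_nonneg_left hfrac
          have := hpos (k+2*N); have := Nat.factorial_pos (k+2*N); positivity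
      _ = (C * m (k+2*N) * (Nat.factorial (k+2*N) : ℝ) / δ^(k+2*N)) * g ξ := rfl
  have hKnonneg : 0 ≤ C * m (k+2*N) * (Nat.factorial (k+2*N) : ℝ) / δ^(k+2*N) := by
    have := hpos (k+2*N); have := Nat.factorial_pos (k+2*N); positivity
  have hsum : Summable (fun ξ : Fin N → ℤ => ‖ξ‖^k * ‖b ξ‖) :=
    Summable.of_nonneg_of_le (fun ξ => by positivity) hbd (hg.mul_left _)
  refine ⟨hsum, ?_⟩
  have h2 := Summable.tsum_le_tsum hbd hsum (hg.mul_left _)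
  rw [tsum_mul_left] at h2
  refine h2.trans ?_
  -- constant bound
  have hch : (k+2*N).choose k ≤ 2^(k+2*N) := by
    calc (k+2*N).choose k ≤ ∑ i ∈ Finset.range (k+2*N+1), (k+2*N).choose i :=
          Finset.single_le_sum (fun i _ => Nat.zero_le _) (Finset.mem_range.2 (by omega))
      _ = 2^(k+2*N) := Nat.sum_range_choose _
  have hfactnat : (k+2*N).factorial ≤ 2^(k+2*N) * k.factorial * (2*N).factorial := by
    have heq := Nat.choose_mul_factorial_mul_factorial (Nat.le_add_right k (2*N))
    have : k + 2*N - k = 2*N := by omega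
    rw [this] at heq
    calc (k+2*N).factorial = (k+2*N).choose k * k.factorial * (2*N).factorial := heq.symm
      _ ≤ 2^(k+2*N) * k.factorial * (2*N).factorial := by
          apply Nat.mul_le_mul_right
          exact Nat.mul_le_mul_right _ hch
  have hff : ((k+2*N).factorial : ℝ) ≤ 2^(k+2*N) * (k.factorial : ℝ) * ((2*N).factorial : ℝ) := by
    exact_mod_cast hfactnat
  have hfm := hmod k (2*N)
  have hcore : m (k+2*N) * ((k+2*N).factorial : ℝ) ≤
      (2*H)^(k+2*N) * (m (2*N) * ((2*N).factorial : ℝ) * m k * (k.factorial : ℝ)) := by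
    calc m (k+2*N) * ((k+2*N).factorial : ℝ)
        ≤ (H^(k+2*N) * m k * m (2*N)) * (2^(k+2*N) * (k.factorial : ℝ) * ((2*N).factorial : ℝ)) := by
          apply mul_le_mul hfm hff (by positivity)
          have := hpos k; have := hpos (2*N); positivity
      _ = (2*H)^(k+2*N) * (m (2*N) * ((2*N).factorial : ℝ) * m k * (k.factorial : ℝ)) := by
          rw [mul_pow]; ring
  have hfin : C * m (k+2*N) * ((k+2*N).factorial : ℝ) / δ^(k+2*N) ≤
      C * m (2*N) * ((2*N).factorial : ℝ) * (2*H/δ)^(2*N) * ((2*H/δ)^k * (m k * (k.factorial : ℝ))) := by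
    rw [div_le_iff₀ (by positivity)]
    have hexp : C * m (2*N) * ((2*N).factorial : ℝ) * (2*H/δ)^(2*N) * ((2*H/δ)^k * (m k * (k.factorial : ℝ))) * δ^(k+2*N)
        = C * ((2*H)^(k+2*N) * (m (2*N) * ((2*N).factorial : ℝ) * m k * (k.factorial : ℝ))) := by
      rw [div_pow, div_pow, pow_add]
      field_simp
      ring
    rw [hexp, mul_assoc]
    apply mul_le_mul_of_nonneg_left _ hC.le
    rw [← mul_assoc] at hcore ⊢
    exact hcore
  calc (C * m (k+2*N) * ((k+2*N).factorial : ℝ) / δ^(k+2*N)) * S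
      ≤ (C * m (2*N) * ((2*N).factorial : ℝ) * (2*H/δ)^(2*N) * ((2*H/δ)^k * (m k * (k.factorial : ℝ)))) * S :=
        mul_le_mul_of_nonneg_right hfin hS.le
    _ = C * m (2*N) * ((2*N).factorial : ℝ) * (2*H/δ)^(2*N) * S * (2*H/δ)^k * m k * (k.factorial : ℝ) := by
        ring
end
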